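/- Let (X, ↪, P) be a primal-proximity space. Then: (1) for all A, B ⊆ X, if Aᶜ ∉ P then A ∩ B^↪ = ∅; (2) ({x} ↪ X for every x ∈ X) if and only if P = {A ⊆ X : A ≠ X}; (3) if P = {A ⊆ X : A ≠ X} then X^↪ = X; where A^↪ := {x ∈ X : {x} ↪ A}. -/
import Mathlib


open Set

/-- A collection `P` of subsets of `X` is a *primal* on `X`. -/
def IsPrimalOn {X : Type*} (P : Set (Set X)) : Prop :=
  (Set.univ : Set X) ∉ P ∧
  (∀ A B : Set X, A ∈ P → B ⊆ A → B ∈ P) ∧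
  (∀ A B : Set X, A ∩ B ∈ P → A ∈ P ∨ B ∈ P)

/-- A binary relation `r` on the power set of `X` is a *primal-proximity* with
respect to a primal `P` on `X`. -/
def IsPrimalProximity {X : Type*} (P : Set (Set X)) (r : Set X → Set X → Prop) : Prop :=
  (∀ A B : Set X, r A B → r B A) ∧
  (∀ A B C : Set X, r A (B ∪ C) ↔ (r A B ∨ r A C)) ∧
  (∀ A : Set X, Aᶜ ∉ P → ∀ B : Set X, ¬ r A B) ∧
  (∀ A B : Set X, (A ∩ B)ᶜ ∈ P → r A B) ∧
  (∀ A B : Set X, ¬ r A B →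
    ∃ C D : Set X, ¬ r A Cᶜ ∧ ¬ r Dᶜ B ∧ (C ∩ D)ᶜ ∉ P)

/-- The point-primal proximity of `A`: `A^↪ = {x | {x} ↪ A}`. -/
def ppp {X : Type*} (r : Set X → Set X → Prop) (A : Set X) : Set X :=
  {x : X | r {x} A}

theorem stmt_10 {X : Type*} [Nonempty X] (P : Set (Set X)) (r : Set X → Set X → Prop)
    (hP : IsPrimalOn P) (hr : IsPrimalProximity P r) :
    (∀ A B : Set X, Aᶜ ∉ P → A ∩ ppp r B = ∅) ∧
    ((∀ x : X, r {x} Set.univ) ↔ P = {A : Set X | A ≠ Set.univ}) ∧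
    (P = {A : Set X | A ≠ Set.univ} → ppp r Set.univ = Set.univ) := by
  obtain ⟨huniv, hdown, hinter⟩ := hP
  obtain ⟨hsym, hun, h3, h4, h5⟩ := hr
  refine ⟨?_, ⟨?_, ?_⟩, ?_⟩
  · intro A B hA
    ext x
    simp only [Set.mem_inter_iff, Set.mem_empty_iff_false, iff_false, not_and]
    intro hxA hxB
    have hsc : {x}ᶜ ∉ P := fun h => hA (hdown _ _ h (Set.compl_subset_compl.2 (Set.singleton_subset_iff.2 hxA)))
    exact h3 _ (by simpa using hsc) _ hxB
  · intro hall
    ext A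
    simp only [Set.mem_setOf_eq, ne_eq]
    constructor
    · rintro hA rfl; exact huniv hA
    · intro hA
      by_contra hAP
      have hx : ∃ x, x ∉ A := by
        by_contra h
        push_neg at h
        exact hA (Set.eq_univ_of_forall h)
      obtain ⟨x, hxA⟩ := hx
      have hnr : ∀ B, ¬ r Aᶜ B := h3 Aᶜ (by simpa using hAP)
      have hcup : ({x} : Set X) ∪ Aᶜ = Aᶜ := by
        exact Set.union_eq_self_of_subset_left (Set.singleton_subset_iff.2 hxA)
      have : r Set.univ ({x} ∪ Aᶜ) := (hun _ _ _).2 (Or.inl (hsym _ _ (hall x)))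
      rw [hcup] at this
      exact hnr _ (hsym _ _ this)
  · intro hPeq x
    apply h4
    rw [hPeq]
    simp only [Set.mem_setOf_eq, ne_eq, Set.inter_univ]
    intro h
    have : x ∈ ({x} : Set X)ᶜ := h ▸ Set.mem_univ x
    exact this rfl
  · intro hPeq
    ext x
    simp only [ppp, Set.mem_setOf_eq, Set.mem_univ, iff_true]
    apply h4
    rw [hPeq]
    simp only [Set.mem_setOf_eq, ne_eq, Set.inter_univ]
    intro h
    have : x ∈ ({x} : Set X)ᶜ := h ▸ Set.mem_univ x
    exact this rfl
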